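/- Conjugate integration by parts for complex Gaussian variables: let Z be a complex Gaussian random variable with parameter ρ > 0, and let f : ℂ → ℂ be continuously differentiable (as a map ℝ² → ℝ²) with f and its derivative bounded. Then E[Z · f(Z)] = ρ · E[(∂f/∂z̄)(Z)]. -/

import Mathlib

open MeasureTheory ProbabilityTheory Complex Finset

open Filter Real Set
open scoped NNReal ENNReal

section Helpers

lemma hasDerivAt_gaussianPDFReal {v : ℝ≥0} (hv : v ≠ 0) (x : ℝ) :
    HasDerivAt (gaussianPDFReal 0 v) (-(x / v) * gaussianPDFReal 0 v x) x := by
  have hv' : (v : ℝ) ≠ 0 := by exact_mod_cast hv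
  unfold gaussianPDFReal
  have h1 : HasDerivAt (fun x : ℝ => -(x - 0) ^ 2 / (2 * (v:ℝ))) (-(x / v)) x := by
    have h := (((hasDerivAt_id x).sub_const (0:ℝ)).pow 2).neg.div_const (2 * (v : ℝ))
    refine h.congr_deriv ?_
    simp only [id]
    field_simp
    ring
  have h2 := (h1.exp).const_mul ((Real.sqrt (2 * Real.pi * v))⁻¹)
  refine h2.congr_deriv ?_
  ring

lemma continuous_gaussianPDFReal (v : ℝ≥0) : Continuous (gaussianPDFReal 0 v) := by
  unfold gaussianPDFReal
  fun_prop

lemma gaussianPDFReal_zero_eq (v : ℝ≥0) :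
    gaussianPDFReal 0 v = fun x => (Real.sqrt (2 * Real.pi * (v:ℝ)))⁻¹ * rexp (-(x^2)/(2*(v:ℝ))) := by
  funext x
  simp [gaussianPDFReal]

lemma integrable_mul_gaussianPDFReal {v : ℝ≥0} (hv : v ≠ 0) :
    Integrable (fun x : ℝ => x * gaussianPDFReal 0 v x) := by
  have hv' : (0:ℝ) < (v : ℝ) := by positivity
  have hb : (0:ℝ) < 1 / (2 * (v:ℝ)) := by positivity
  have h := (integrable_mul_exp_neg_mul_sq hb).const_mul ((Real.sqrt (2 * Real.pi * v))⁻¹)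
  refine h.congr ?_
  filter_upwards with x
  simp only [gaussianPDFReal_zero_eq]
  rw [show -(x ^ 2) / (2 * (v:ℝ)) = -(1 / (2 * (v:ℝ))) * x ^ 2 by ring]
  ring

lemma tendsto_gaussianPDFReal_atTop (v : ℝ≥0) (hv : v ≠ 0) :
    Tendsto (gaussianPDFReal 0 v) atTop (nhds 0) := by
  have hv' : (0:ℝ) < (v : ℝ) := by positivity
  rw [gaussianPDFReal_zero_eq]
  have h1 : Tendsto (fun x:ℝ => -(x^2)/(2*(v:ℝ))) atTop atBot := by
    rw [show (fun x:ℝ => -(x^2)/(2*(v:ℝ))) = fun x => -(x^2/(2*(v:ℝ))) from funext fun x => by ring]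
    exact tendsto_neg_atTop_atBot.comp
      ((tendsto_pow_atTop (by norm_num)).atTop_div_const (by positivity))
  have h2 := Real.tendsto_exp_atBot.comp h1
  have h3 := h2.const_mul ((Real.sqrt (2 * Real.pi * (v:ℝ)))⁻¹)
  simpa [Function.comp_def] using h3

lemma tendsto_gaussianPDFReal_atBot (v : ℝ≥0) (hv : v ≠ 0) :
    Tendsto (gaussianPDFReal 0 v) atBot (nhds 0) := by
  have hv' : (0:ℝ) < (v : ℝ) := by positivity
  rw [gaussianPDFReal_zero_eq]
  have hsq : Tendsto (fun x:ℝ => x^2) atBot atTop := by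
    have := (tendsto_pow_atTop (α := ℝ) (n := 2) (by norm_num)).comp (tendsto_neg_atBot_atTop (G := ℝ))
    simpa [Function.comp_def, neg_sq] using this
  have h1 : Tendsto (fun x:ℝ => -(x^2)/(2*(v:ℝ))) atBot atBot := by
    rw [show (fun x:ℝ => -(x^2)/(2*(v:ℝ))) = fun x => -(x^2/(2*(v:ℝ))) from funext fun x => by ring]
    exact (tendsto_neg_atTop_atBot (G := ℝ)).comp (hsq.atTop_div_const (by positivity))
  have h2 := Real.tendsto_exp_atBot.comp h1
  have h3 := h2.const_mul ((Real.sqrt (2 * Real.pi * (v:ℝ)))⁻¹)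
  simpa [Function.comp_def] using h3

lemma integral_gaussianReal_eq {v : ℝ≥0} (hv : v ≠ 0) {E : Type*} [NormedAddCommGroup E]
    [NormedSpace ℝ E] (h : ℝ → E) :
    ∫ x, h x ∂(gaussianReal 0 v) = ∫ x, gaussianPDFReal 0 v x • h x := by
  rw [gaussianReal_of_var_ne_zero _ hv]
  have : gaussianPDF 0 v = fun x => ((gaussianPDFReal 0 v x).toNNReal : ℝ≥0∞) := rfl
  rw [this, integral_withDensity_eq_integral_smul
    (by exact (measurable_gaussianPDFReal 0 v).real_toNNReal)]
  congr 1
  ext x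
  rw [NNReal.smul_def, Real.coe_toNNReal _ (gaussianPDFReal_nonneg 0 v x)]

lemma integrable_gaussianReal_iff {v : ℝ≥0} (hv : v ≠ 0) {E : Type*} [NormedAddCommGroup E]
    [NormedSpace ℝ E] (h : ℝ → E) :
    Integrable h (gaussianReal 0 v) ↔
      Integrable (fun x => gaussianPDFReal 0 v x • h x) volume := by
  rw [gaussianReal_of_var_ne_zero _ hv]
  have : gaussianPDF 0 v = fun x => ((gaussianPDFReal 0 v x).toNNReal : ℝ≥0∞) := rfl
  rw [this, integrable_withDensity_iff_integrable_smul
    (by exact (measurable_gaussianPDFReal 0 v).real_toNNReal)]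
  constructor <;> intro hh <;> refine hh.congr ?_ <;> filter_upwards with x <;>
    rw [NNReal.smul_def, Real.coe_toNNReal _ (gaussianPDFReal_nonneg 0 v x)]

lemma gaussian_ibp_1d {v : ℝ≥0} (hv : v ≠ 0) (g g' : ℝ → ℂ)
    (hg : ∀ x, HasDerivAt g (g' x) x) (hg'c : Continuous g') (C : ℝ)
    (hgb : ∀ x, ‖g x‖ ≤ C) (hg'b : ∀ x, ‖g' x‖ ≤ C) :
    ∫ x, (x : ℂ) * g x ∂(gaussianReal 0 v) = (v : ℝ) • ∫ x, g' x ∂(gaussianReal 0 v) := by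
  have hv' : (0:ℝ) < (v : ℝ) := by positivity
  have hC : 0 ≤ C := le_trans (norm_nonneg _) (hgb 0)
  have hgc : Continuous g := by
    rw [continuous_iff_continuousAt]; exact fun x => (hg x).continuousAt
  set φ : ℝ → ℝ := gaussianPDFReal 0 v with hφdef
  have hφc : Continuous φ := continuous_gaussianPDFReal v
  have hφ0 : ∀ x, 0 ≤ φ x := gaussianPDFReal_nonneg 0 v
  have hφint : Integrable φ := integrable_gaussianPDFReal 0 v
  have hxφint : Integrable (fun x => x * φ x) := integrable_mul_gaussianPDFReal hv
  set G : ℝ → ℂ := fun x => ((v : ℝ) * φ x) • g x with hGdef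
  set G' : ℝ → ℂ := fun x => ((v : ℝ) * φ x) • g' x + (-x * φ x) • g x with hG'def
  have hGd : ∀ x, HasDerivAt G (G' x) x := by
    intro x
    have h1 : HasDerivAt (fun x => (v : ℝ) * φ x) (-x * φ x) x := by
      have := (hasDerivAt_gaussianPDFReal hv x).const_mul (v : ℝ)
      refine this.congr_deriv ?_
      field_simp
      rfl
    exact h1.smul (hg x)
  -- integrability of the pieces (w.r.t. volume)
  have hmeas1 : Continuous (fun x : ℝ => (-x * φ x) • g x) := by fun_prop
  have hI2 : Integrable (fun x : ℝ => (-x * φ x) • g x) := by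
    refine Integrable.mono' ((hxφint.norm).mul_const C) hmeas1.aestronglyMeasurable ?_
    filter_upwards with x
    rw [norm_smul]
    have : ‖(-x * φ x : ℝ)‖ = ‖x * φ x‖ := by rw [neg_mul, norm_neg]
    rw [this]
    exact mul_le_mul_of_nonneg_left (hgb x) (norm_nonneg _)
  have hmeas2 : Continuous (fun x : ℝ => ((v : ℝ) * φ x) • g' x) := by fun_prop
  have hI1 : Integrable (fun x : ℝ => ((v : ℝ) * φ x) • g' x) := by
    refine Integrable.mono' (hφint.const_mul ((v:ℝ) * C)) hmeas2.aestronglyMeasurable ?_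
    filter_upwards with x
    rw [norm_smul, Real.norm_of_nonneg (mul_nonneg (le_of_lt hv') (hφ0 x))]
    calc (v:ℝ) * φ x * ‖g' x‖ ≤ (v:ℝ) * φ x * C :=
          mul_le_mul_of_nonneg_left (hg'b x) (mul_nonneg (le_of_lt hv') (hφ0 x))
      _ = (v:ℝ) * C * φ x := by ring
  have hIG' : Integrable G' := hI1.add hI2
  have hGcont : Continuous G := by fun_prop
  have hGbound : ∀ x, ‖G x‖ ≤ (v:ℝ) * C * φ x := by
    intro x
    rw [hGdef]
    simp only []
    rw [norm_smul, Real.norm_of_nonneg (mul_nonneg hv'.le (hφ0 x))]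
    calc (v:ℝ) * φ x * ‖g x‖ ≤ (v:ℝ) * φ x * C :=
          mul_le_mul_of_nonneg_left (hgb x) (mul_nonneg hv'.le (hφ0 x))
      _ = (v:ℝ) * C * φ x := by ring
  have htop : Tendsto G atTop (nhds 0) := by
    apply squeeze_zero_norm hGbound
    have := (tendsto_gaussianPDFReal_atTop v hv).const_mul ((v:ℝ) * C)
    simpa using this
  have hbot : Tendsto G atBot (nhds 0) := by
    apply squeeze_zero_norm hGbound
    have := (tendsto_gaussianPDFReal_atBot v hv).const_mul ((v:ℝ) * C)
    simpa using this
  have hInt0 : ∫ x, G' x = 0 := by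
    have hIoi : ∫ x in Ioi (0:ℝ), G' x = 0 - G 0 :=
      integral_Ioi_of_hasDerivAt_of_tendsto hGcont.continuousWithinAt
        (fun x _ => hGd x) hIG'.integrableOn htop
    have hIic : ∫ x in Iic (0:ℝ), G' x = G 0 - 0 :=
      integral_Iic_of_hasDerivAt_of_tendsto hGcont.continuousWithinAt
        (fun x _ => hGd x) hIG'.integrableOn hbot
    rw [← intervalIntegral.integral_Iic_add_Ioi hIG'.integrableOn hIG'.integrableOn, hIoi, hIic]
    ring
  rw [integral_gaussianReal_eq hv, integral_gaussianReal_eq hv]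
  have key : (fun x => φ x • ((x:ℂ) * g x)) = fun x => ((v:ℝ) * φ x) • g' x - G' x := by
    funext x
    rw [hG'def]
    simp only [Complex.real_smul]
    push_cast
    ring
  rw [key, integral_sub hI1 hIG', hInt0, sub_zero,
    show (fun x => ((v:ℝ) * φ x) • g' x) = fun x => (v:ℝ) • (φ x • g' x) from
      funext fun x => mul_smul _ _ _,
    integral_smul]

end Helpers

/-- Wirtinger derivative `∂f/∂z = (1/2)(∂f/∂x − i ∂f/∂y)`. -/
noncomputable def wirtingerDeriv (f : ℂ → ℂ) (z : ℂ) : ℂ :=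
  (fderiv ℝ f z 1 - Complex.I * fderiv ℝ f z Complex.I) / 2

/-- Conjugate Wirtinger derivative `∂f/∂z̄ = (1/2)(∂f/∂x + i ∂f/∂y)`. -/
noncomputable def wirtingerDerivBar (f : ℂ → ℂ) (z : ℂ) : ℂ :=
  (fderiv ℝ f z 1 + Complex.I * fderiv ℝ f z Complex.I) / 2

/-- Law of a complex Gaussian variable with parameter `ρ`: the law of `Z = X + iY` where
`X, Y` are independent real centered Gaussian variables of mean `0` and variance `ρ/2`. -/
noncomputable def complexGaussian (ρ : ℝ) : Measure ℂ :=
  ((gaussianReal 0 (ρ/2).toNNReal).prod (gaussianReal 0 (ρ/2).toNNReal)).map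
    (fun p => (p.1 : ℂ) + (p.2 : ℂ) * Complex.I)


/-- Conjugate integration by parts for a complex Gaussian variable `Z` with parameter `ρ > 0`:
`E[Z·f(Z)] = ρ·E[(∂f/∂z̄)(Z)]` for `f : ℂ → ℂ` continuously differentiable with
`f` and its derivative bounded. -/
theorem complex_gaussian_conj_integration_by_parts
    {Ω : Type*} [MeasurableSpace Ω] (P : Measure Ω) [IsProbabilityMeasure P]
    (Z : Ω → ℂ) (hZmeas : Measurable Z) (ρ : ℝ) (hρ : 0 < ρ)
    (hZ : Measure.map Z P = complexGaussian ρ)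
    (f : ℂ → ℂ) (hf : ContDiff ℝ 1 f) (C : ℝ)
    (hfb : ∀ z, ‖f z‖ ≤ C) (hfd : ∀ z, ‖fderiv ℝ f z‖ ≤ C) :
    ∫ ω, Z ω * f (Z ω) ∂P
      = (ρ : ℂ) * ∫ ω, wirtingerDerivBar f (Z ω) ∂P := by
  set v : ℝ≥0 := (ρ/2).toNNReal with hvdef
  have hv : v ≠ 0 := by
    simp only [hvdef, ne_eq, Real.toNNReal_eq_zero, not_le]
    linarith
  have hvr : (v : ℝ) = ρ / 2 := Real.coe_toNNReal _ (by linarith)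
  set μ : Measure ℝ := gaussianReal 0 v with hμdef
  set T : ℝ × ℝ → ℂ := fun p => (p.1 : ℂ) + (p.2 : ℂ) * Complex.I with hTdef
  have hTc : Continuous T := by
    rw [hTdef]
    fun_prop
  have hfc : Continuous f := hf.continuous
  have hDc : Continuous (fderiv ℝ f) := hf.continuous_fderiv one_ne_zero
  have hD1c : Continuous (fun z => fderiv ℝ f z 1) :=
    ((ContinuousLinearMap.apply ℝ ℂ (1 : ℂ)).continuous).comp hDc
  have hDIc : Continuous (fun z => fderiv ℝ f z Complex.I) :=
    ((ContinuousLinearMap.apply ℝ ℂ (Complex.I)).continuous).comp hDc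
  have hD1b : ∀ z, ‖fderiv ℝ f z 1‖ ≤ C := by
    intro z
    calc ‖fderiv ℝ f z 1‖ ≤ ‖fderiv ℝ f z‖ * ‖(1:ℂ)‖ := (fderiv ℝ f z).le_opNorm 1
      _ = ‖fderiv ℝ f z‖ := by simp
      _ ≤ C := hfd z
  have hDIb : ∀ z, ‖fderiv ℝ f z Complex.I‖ ≤ C := by
    intro z
    calc ‖fderiv ℝ f z Complex.I‖ ≤ ‖fderiv ℝ f z‖ * ‖Complex.I‖ :=
          (fderiv ℝ f z).le_opNorm Complex.I
      _ = ‖fderiv ℝ f z‖ := by simp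
      _ ≤ C := hfd z
  have hwc : Continuous (wirtingerDerivBar f) := by
    unfold wirtingerDerivBar
    exact (hD1c.add (continuous_const.mul hDIc)).div_const 2
  -- transfer to product measure
  have hmap : ∀ (h : ℂ → ℂ), Continuous h →
      ∫ ω, h (Z ω) ∂P = ∫ p, h (T p) ∂(μ.prod μ) := by
    intro h hc
    rw [← integral_map hZmeas.aemeasurable hc.aestronglyMeasurable, hZ, complexGaussian,
      integral_map hTc.measurable.aemeasurable hc.aestronglyMeasurable]
  have hL := hmap (fun z => z * f z) (continuous_id.mul hfc)
  have hR := hmap (wirtingerDerivBar f) hwc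
  rw [hL, hR]
  -- integrability facts
  have hμid : Integrable (fun x : ℝ => x) μ := by
    rw [hμdef, integrable_gaussianReal_iff hv]
    refine (integrable_mul_gaussianPDFReal hv).congr ?_
    filter_upwards with x
    simp [smul_eq_mul, mul_comm]
  have h1int : Integrable (fun p : ℝ × ℝ => p.1) (μ.prod μ) := by
    have h := hμid
    have hmapeq : (μ.prod μ).map Prod.fst = μ := Measure.fst_prod
    rw [← hmapeq] at h
    exact (integrable_map_measure measurable_id.aestronglyMeasurable
      measurable_fst.aemeasurable).mp h
  have h2int : Integrable (fun p : ℝ × ℝ => p.2) (μ.prod μ) := by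
    have h := hμid
    have hmapeq : (μ.prod μ).map Prod.snd = μ := Measure.snd_prod
    rw [← hmapeq] at h
    exact (integrable_map_measure measurable_id.aestronglyMeasurable
      measurable_snd.aemeasurable).mp h
  have HA : Integrable (fun p : ℝ × ℝ => (p.1 : ℂ) * f (T p)) (μ.prod μ) := by
    refine Integrable.mono' (h1int.norm.mul_const C)
      (((Complex.continuous_ofReal.comp continuous_fst).mul (hfc.comp hTc)).aestronglyMeasurable) ?_
    filter_upwards with p
    rw [norm_mul, Complex.norm_real]
    exact mul_le_mul_of_nonneg_left (hfb _) (norm_nonneg _)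
  have HB : Integrable (fun p : ℝ × ℝ => (p.2 : ℂ) * f (T p)) (μ.prod μ) := by
    refine Integrable.mono' (h2int.norm.mul_const C)
      (((Complex.continuous_ofReal.comp continuous_snd).mul (hfc.comp hTc)).aestronglyMeasurable) ?_
    filter_upwards with p
    rw [norm_mul, Complex.norm_real]
    exact mul_le_mul_of_nonneg_left (hfb _) (norm_nonneg _)
  have HD1 : Integrable (fun p : ℝ × ℝ => fderiv ℝ f (T p) 1) (μ.prod μ) := by
    refine Integrable.mono' (integrable_const C) ((hD1c.comp hTc).aestronglyMeasurable) ?_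
    filter_upwards with p using hD1b _
  have HDI : Integrable (fun p : ℝ × ℝ => fderiv ℝ f (T p) Complex.I) (μ.prod μ) := by
    refine Integrable.mono' (integrable_const C) ((hDIc.comp hTc).aestronglyMeasurable) ?_
    filter_upwards with p using hDIb _
  -- IBP in the first coordinate
  have hA : ∫ p, (p.1 : ℂ) * f (T p) ∂(μ.prod μ)
      = (v : ℝ) • ∫ p, fderiv ℝ f (T p) 1 ∂(μ.prod μ) := by
    rw [integral_prod_symm _ HA, integral_prod_symm _ HD1, ← integral_smul]
    apply integral_congr_ae
    filter_upwards with y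
    refine gaussian_ibp_1d hv (fun x => f (T (x, y)))
      (fun x => fderiv ℝ f (T (x, y)) 1) ?_ ?_ C (fun x => hfb _) (fun x => hD1b _)
    · intro x
      have hl : HasDerivAt (fun x : ℝ => (x : ℂ) + (y : ℂ) * Complex.I) 1 x := by
        simpa using (Complex.ofRealCLM.hasDerivAt (x := x)).add_const ((y : ℂ) * Complex.I)
      have h2 := ((hf.differentiable one_ne_zero) _).hasFDerivAt.comp_hasDerivAt x hl
      exact h2
    · exact hD1c.comp (hTc.comp (continuous_id.prodMk continuous_const))
  -- IBP in the second coordinate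
  have hB : ∫ p, (p.2 : ℂ) * f (T p) ∂(μ.prod μ)
      = (v : ℝ) • ∫ p, fderiv ℝ f (T p) Complex.I ∂(μ.prod μ) := by
    rw [integral_prod _ HB, integral_prod _ HDI, ← integral_smul]
    apply integral_congr_ae
    filter_upwards with x
    refine gaussian_ibp_1d hv (fun y => f (T (x, y)))
      (fun y => fderiv ℝ f (T (x, y)) Complex.I) ?_ ?_ C (fun y => hfb _) (fun y => hDIb _)
    · intro y
      have hl : HasDerivAt (fun y : ℝ => (x : ℂ) + (y : ℂ) * Complex.I) Complex.I y := by
        simpa using ((Complex.ofRealCLM.hasDerivAt (x := y)).mul_const Complex.I).const_add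
          ((x : ℂ))
      have h2 := ((hf.differentiable one_ne_zero) _).hasFDerivAt.comp_hasDerivAt y hl
      exact h2
    · exact hDIc.comp (hTc.comp (continuous_const.prodMk continuous_id))
  -- split the left-hand side
  have hsplit : (fun p : ℝ × ℝ => T p * f (T p))
      = fun p => (p.1 : ℂ) * f (T p) + Complex.I * ((p.2 : ℂ) * f (T p)) := by
    funext p
    rw [hTdef]
    ring
  rw [hsplit, integral_add HA (HB.const_mul Complex.I), integral_const_mul, hA, hB]
  have hw : ∫ p, wirtingerDerivBar f (T p) ∂(μ.prod μ)
      = (∫ p, fderiv ℝ f (T p) 1 ∂(μ.prod μ)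
         + Complex.I * ∫ p, fderiv ℝ f (T p) Complex.I ∂(μ.prod μ)) / 2 := by
    unfold wirtingerDerivBar
    rw [integral_div, integral_add HD1 (HDI.const_mul Complex.I), integral_const_mul]
  rw [hw]
  simp only [Complex.real_smul, hvr]
  push_cast
  ring
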